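/- Let 0 < a < 1. There exists a constant C > 0 (depending only on a) such that for every α ∈ (0,1) and every λ ∈ (0,a], one has √λ · g_α(λ) ≤ C/√α, where g_α(λ) = 1/(λ + (1 − λ^{√α})²). -/

import Mathlib

/-- For `α > 0` and `λ ∈ (0,1)`, the generator function
`g_α(λ) = 1/(λ + (1 − λ^{√α})²)` where `λ^{√α} = exp(√α · log λ)`. -/
noncomputable def genFun (α lam : ℝ) : ℝ :=
  1 / (lam + (1 - Real.exp (Real.sqrt α * Real.log lam)) ^ 2)

set_option maxHeartbeats 1000000 in
/-- Let `0 < a < 1`. There exists a constant `C > 0` (depending only on `a`) such that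
for every `α ∈ (0,1)` and every `λ ∈ (0,a]`, one has `√λ · g_α(λ) ≤ C/√α`. -/
theorem stmt0 (a : ℝ) (ha0 : 0 < a) (ha1 : a < 1) :
    ∃ C > (0 : ℝ), ∀ α ∈ Set.Ioo (0 : ℝ) 1, ∀ lam ∈ Set.Ioc (0 : ℝ) a,
      Real.sqrt lam * genFun α lam ≤ C / Real.sqrt α := by
  have hexp1 : (0:ℝ) < 1 - Real.exp (-1) := by
    have := Real.exp_lt_one_iff.mpr (by norm_num : (-1:ℝ) < 0)
    linarith
  have hla : Real.log a < 0 := Real.log_neg ha0 ha1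
  set A : ℝ := ((1 - Real.exp (-1)) ^ 2)⁻¹ with hA
  set B : ℝ := (-Real.log a)⁻¹ with hB
  have hApos : 0 < A := by positivity
  have hBpos : 0 < B := inv_pos.mpr (by linarith)
  refine ⟨max A B, lt_max_of_lt_left hApos, ?_⟩
  rintro α ⟨hα0, hα1⟩ lam ⟨hl0, hla'⟩
  set t := Real.sqrt α with htdef
  have ht0 : 0 < t := Real.sqrt_pos.mpr hα0
  have ht1 : t ≤ 1 := by
    rw [htdef, show (1:ℝ) = Real.sqrt 1 by simp]
    exact Real.sqrt_le_sqrt hα1.le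
  set L : ℝ := -Real.log lam with hLdef
  have hlogle : Real.log lam ≤ Real.log a := Real.log_le_log hl0 hla'
  have hLa : -Real.log a ≤ L := by simp [hLdef]; linarith
  have hL0 : 0 < L := lt_of_lt_of_le (by linarith) hLa
  have hsq : Real.sqrt lam ^ 2 = lam := Real.sq_sqrt hl0.le
  have hsl1 : Real.sqrt lam ≤ 1 := by
    rw [show (1:ℝ) = Real.sqrt 1 by simp]
    exact Real.sqrt_le_sqrt (by linarith)
  have hsl0 : 0 ≤ Real.sqrt lam := Real.sqrt_nonneg _
  set D : ℝ := lam + (1 - Real.exp (t * Real.log lam)) ^ 2 with hD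
  have hDpos : 0 < D := by positivity
  have hrw : t * Real.log lam = -(t * L) := by rw [hLdef]; ring
  clear_value t L A B D
  have key : Real.sqrt lam * t ≤ max A B * D := by
    rcases le_or_gt 1 (t * L) with hcase | hcase
    · -- t*L ≥ 1: denominator ≥ (1 - e⁻¹)²
      have h1 : Real.exp (t * Real.log lam) ≤ Real.exp (-1) := by
        rw [hrw]; exact Real.exp_le_exp.mpr (by linarith)
      have h2 : (1 - Real.exp (-1)) ^ 2 ≤ (1 - Real.exp (t * Real.log lam)) ^ 2 := by
        nlinarith [Real.exp_pos (t * Real.log lam)]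
      have hAD : 1 ≤ A * D := by
        have : (1 - Real.exp (-1)) ^ 2 ≤ D := by
          have : 0 < lam := hl0
          rw [hD]; nlinarith
        calc (1:ℝ) = A * (1 - Real.exp (-1)) ^ 2 := by
              rw [hA, inv_mul_cancel₀ (pow_ne_zero 2 hexp1.ne')]
          _ ≤ A * D := by nlinarith
      have : Real.sqrt lam * t ≤ 1 := by nlinarith
      calc Real.sqrt lam * t ≤ 1 := this
        _ ≤ A * D := hAD
        _ ≤ max A B * D := by
            have := le_max_left A B
            nlinarith
    · -- t*L < 1: 1 - e^{-tL} ≥ tL/2, and AM-GM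
      have hx0 : 0 < t * L := mul_pos ht0 hL0
      have hexp : Real.exp (t * Real.log lam) ≤ 1 / (1 + t * L) := by
        rw [hrw, Real.exp_neg]
        rw [div_eq_inv_mul, mul_one]
        exact inv_anti₀ (by linarith) (by linarith [Real.add_one_le_exp (t * L)])
      have hhalf : t * L / 2 ≤ 1 - Real.exp (t * Real.log lam) := by
        have h1 : 1 / (1 + t * L) ≤ 1 - t * L / 2 := by
          rw [div_le_iff₀ (by linarith : (0:ℝ) < 1 + t * L)]
          have hmul : 0 ≤ t * L * (1 - t * L) :=
            mul_nonneg hx0.le (by linarith)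
          nlinarith [hmul]
        linarith
      have hDge : Real.sqrt lam * (t * L) ≤ D := by
        have hsq2 : (t * L / 2) ^ 2 ≤ (1 - Real.exp (t * Real.log lam)) ^ 2 := by
          nlinarith
        have amgm : Real.sqrt lam * (t * L) ≤ lam + (t * L / 2) ^ 2 := by
          nlinarith [sq_nonneg (Real.sqrt lam - t * L / 2)]
        rw [hD]; linarith [hsq2, amgm]
      have hBL : 1 ≤ B * L := by
        rw [hB]
        rw [inv_mul_eq_div, le_div_iff₀ (by linarith)]
        linarith
      calc Real.sqrt lam * t ≤ B * L * (Real.sqrt lam * t) := by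
              nlinarith [mul_nonneg (by linarith : (0:ℝ) ≤ B * L - 1) (mul_nonneg hsl0 ht0.le)]
        _ = B * (Real.sqrt lam * (t * L)) := by ring
        _ ≤ B * D := by nlinarith
        _ ≤ max A B * D := by
            have := le_max_right A B
            nlinarith
  rw [genFun, ← htdef, ← hD, mul_one_div, div_le_div_iff₀ hDpos ht0]
  linarith [key]
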